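/- Let $\lambda,\alpha \in \mathbb{C}^*$, $h \in \mathbb{C}[t]$ with $\deg h = 1$, and $\beta \in \mathbb{C}$. In $\Omega(\lambda,\alpha,h)\otimes\Omega(\lambda,\beta) = \mathbb{C}[\partial_1,\partial_2,t]$, for all $k \in \mathbb{Z}$, $l, n \in \mathbb{Z}_{\geq 0}$ and $f \in \mathbb{C}[t]$, one has $\lambda^{-k} d_k\big(\partial_1^l(\partial_1+\partial_2)^n f\big) = \big[\partial_1\big((\partial_1-k)^l - \partial_1^l\big)f + \big(kG(f) - k^2\alpha F(f)\big)(\partial_1-k)^l\big](\partial_1+\partial_2-k)^n + \partial_1^l f\,(\partial_1+\partial_2 - \beta k)(\partial_1+\partial_2-k)^n$. -/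

import Mathlib

noncomputable section
open Polynomial

/-- The exact polynomial quotient `(h(t) - h(α)) / (t - α)`. -/
def hquot (h : ℂ[X]) (α : ℂ) : ℂ[X] := (h - C (h.eval α)) /ₘ (X - C α)

/-- `F(f) = ((h(t)-h(α))/(t-α)) f - f'`. -/
def Fop (h : ℂ[X]) (α : ℂ) (f : ℂ[X]) : ℂ[X] := hquot h α * f - derivative f

/-- `G(f) = h(α) f + t F(f)`. -/
def Gop (h : ℂ[X]) (α : ℂ) (f : ℂ[X]) : ℂ[X] := C (h.eval α) * f + X * Fop h α f

/-- The tensor product `Ω(λ,α,h) ⊗ Ω(λ,β)`, identified with `ℂ[∂₁,∂₂,t]`: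
variable `0` is `∂₁`, variable `1` is `∂₂`, variable `2` is `t`. -/
abbrev P3 : Type := MvPolynomial (Fin 3) ℂ

/-- The embedding of `ℂ[t]` into `ℂ[∂₁,∂₂,t]` (the variable `t` is `X 2`). -/
def embt (f : ℂ[X]) : P3 := Polynomial.aeval (MvPolynomial.X (2 : Fin 3)) f

/-- The diagonal Virasoro action of `d_k` on `Ω(λ,α,h) ⊗ Ω(λ,β) = ℂ[∂₁,∂₂,t]`:
on the monomial `∂₁^a t^c ⊗ ∂₂^b` it is
`d_k(∂₁^a t^c) ⊗ ∂₂^b + ∂₁^a t^c ⊗ d_k(∂₂^b)`, where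
`d_k(∂₁^a t^c) = λ^k (∂₁-k)^a (∂₁ t^c + k G(t^c) - k² α F(t^c))` and
`d_k(∂₂^b) = λ^k (∂₂-k)^b (∂₂ - β k)`, extended linearly; `c` acts by `0`. -/
def tensorD (lam α β : ℂ) (h : ℂ[X]) (k : ℤ) (p : P3) : P3 :=
  lam ^ k • ∑ e ∈ p.support,
    MvPolynomial.C (MvPolynomial.coeff e p) *
      ((MvPolynomial.X (0 : Fin 3) - MvPolynomial.C ((k : ℂ))) ^ (e 0) *
          (MvPolynomial.X (0 : Fin 3) * embt (Polynomial.X ^ (e 2))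
            + MvPolynomial.C ((k : ℂ)) * embt (Gop h α (Polynomial.X ^ (e 2)))
            - MvPolynomial.C ((k : ℂ) ^ 2 * α) * embt (Fop h α (Polynomial.X ^ (e 2)))) *
          (MvPolynomial.X (1 : Fin 3)) ^ (e 1)
        + (MvPolynomial.X (0 : Fin 3)) ^ (e 0) * embt (Polynomial.X ^ (e 2)) *
            (MvPolynomial.X (1 : Fin 3) - MvPolynomial.C ((k : ℂ))) ^ (e 1) *
            (MvPolynomial.X (1 : Fin 3) - MvPolynomial.C (β * k)))

/-- The subspace `W_m` of `Ω(λ,α,h) ⊗ Ω(λ,β) = ℂ[∂₁,∂₂,t]` spanned by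
`{∂₁^l (∂₁+∂₂)^n f(t) : 0 ≤ l ≤ m, n ∈ ℤ≥0, f ∈ ℂ[t]}` (indexed by `m : ℤ`, so that
`W_{-1} = 0`). -/
def Wsub (m : ℤ) : Submodule ℂ P3 :=
  Submodule.span ℂ {q | ∃ (l n : ℕ) (f : ℂ[X]), (l : ℤ) ≤ m ∧
    q = (MvPolynomial.X (0 : Fin 3)) ^ l *
      (MvPolynomial.X (0 : Fin 3) + MvPolynomial.X (1 : Fin 3)) ^ n * embt f}

local notation "Y₀" => MvPolynomial.X (R := ℂ) (0 : Fin 3)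
local notation "Y₁" => MvPolynomial.X (R := ℂ) (1 : Fin 3)
local notation "Y₂" => MvPolynomial.X (R := ℂ) (2 : Fin 3)

def Dm (α β : ℂ) (h : ℂ[X]) (k : ℤ) (e : Fin 3 →₀ ℕ) : P3 :=
  (Y₀ - MvPolynomial.C ((k : ℂ))) ^ (e 0) *
      (Y₀ * embt (Polynomial.X ^ (e 2))
        + MvPolynomial.C ((k : ℂ)) * embt (Gop h α (Polynomial.X ^ (e 2)))
        - MvPolynomial.C ((k : ℂ) ^ 2 * α) * embt (Fop h α (Polynomial.X ^ (e 2)))) *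
      Y₁ ^ (e 1)
    + Y₀ ^ (e 0) * embt (Polynomial.X ^ (e 2)) *
        (Y₁ - MvPolynomial.C ((k : ℂ))) ^ (e 1) *
        (Y₁ - MvPolynomial.C (β * k))

def Lmap (α β : ℂ) (h : ℂ[X]) (k : ℤ) : P3 →ₗ[ℂ] P3 :=
  Finsupp.lsum ℂ (fun e => LinearMap.toSpanSingleton ℂ P3 (Dm α β h k e)) ∘ₗ
    (AddMonoidAlgebra.coeffLinearEquiv ℂ).toLinearMap

lemma Lmap_apply (α β : ℂ) (h : ℂ[X]) (k : ℤ) (p : P3) :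
    Lmap α β h k p
      = ∑ e ∈ p.support, MvPolynomial.C (MvPolynomial.coeff e p) * Dm α β h k e := by
  rw [show (∑ e ∈ p.support, MvPolynomial.C (MvPolynomial.coeff e p) * Dm α β h k e)
      = ∑ e ∈ p.support, (MvPolynomial.coeff e p) • Dm α β h k e by
    simp [MvPolynomial.smul_eq_C_mul]]
  exact Finsupp.lsum_apply (S := ℂ) _ _

lemma Lmap_monomial (α β : ℂ) (h : ℂ[X]) (k : ℤ) (e : Fin 3 →₀ ℕ) (r : ℂ) :
    Lmap α β h k (MvPolynomial.monomial e r) = MvPolynomial.C r * Dm α β h k e := by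
  rw [← MvPolynomial.smul_eq_C_mul]
  exact Finsupp.lsum_single (R := ℂ) (S := ℂ) _ _ _

lemma embt_pow (c : ℕ) : embt (Polynomial.X ^ c) = Y₂ ^ c := by
  simp [embt]

lemma Lmap_mon (α β : ℂ) (h : ℂ[X]) (k : ℤ) (a b c : ℕ) :
    Lmap α β h k (Y₀ ^ a * Y₁ ^ b * Y₂ ^ c) =
      (Y₀ - MvPolynomial.C ((k : ℂ))) ^ a *
          (Y₀ * Y₂ ^ c
            + MvPolynomial.C ((k : ℂ)) * embt (Gop h α (Polynomial.X ^ c))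
            - MvPolynomial.C ((k : ℂ) ^ 2 * α) * embt (Fop h α (Polynomial.X ^ c))) *
          Y₁ ^ b
        + Y₀ ^ a * Y₂ ^ c * (Y₁ - MvPolynomial.C ((k : ℂ))) ^ b *
            (Y₁ - MvPolynomial.C (β * k)) := by
  have hm : (Y₀ ^ a * Y₁ ^ b * Y₂ ^ c : P3) =
      MvPolynomial.monomial
        ((Finsupp.single (0 : Fin 3) a + Finsupp.single 1 b + Finsupp.single 2 c : Fin 3 →₀ ℕ)) 1 := by
    simp [MvPolynomial.X_pow_eq_monomial, MvPolynomial.monomial_mul]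
  rw [hm, Lmap_monomial, map_one, one_mul, Dm]
  have e0 : ((Finsupp.single (0 : Fin 3) a + Finsupp.single 1 b + Finsupp.single 2 c : Fin 3 →₀ ℕ)) 0 = a := by
    simp [Finsupp.single_apply]
  have e1 : ((Finsupp.single (0 : Fin 3) a + Finsupp.single 1 b + Finsupp.single 2 c : Fin 3 →₀ ℕ)) 1 = b := by
    simp [Finsupp.single_apply]
  have e2 : ((Finsupp.single (0 : Fin 3) a + Finsupp.single 1 b + Finsupp.single 2 c : Fin 3 →₀ ℕ)) 2 = c := by
    simp [Finsupp.single_apply]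
  rw [e0, e1, e2, embt_pow]

lemma core (α β : ℂ) (h : ℂ[X]) (k : ℤ) (l n c : ℕ) :
    Lmap α β h k (Y₀ ^ l * (Y₀ + Y₁) ^ n * Y₂ ^ c) =
      (Y₀ * ((Y₀ - MvPolynomial.C ((k : ℂ))) ^ l - Y₀ ^ l) * Y₂ ^ c
          + (MvPolynomial.C ((k : ℂ)) * embt (Gop h α (Polynomial.X ^ c))
              - MvPolynomial.C ((k : ℂ) ^ 2 * α) * embt (Fop h α (Polynomial.X ^ c))) *
            (Y₀ - MvPolynomial.C ((k : ℂ))) ^ l) *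
        (Y₀ + Y₁ - MvPolynomial.C ((k : ℂ))) ^ n
      + Y₀ ^ l * Y₂ ^ c * (Y₀ + Y₁ - MvPolynomial.C (β * k)) *
          (Y₀ + Y₁ - MvPolynomial.C ((k : ℂ))) ^ n := by
  have expand : (Y₀ ^ l * (Y₀ + Y₁) ^ n * Y₂ ^ c : P3)
      = ∑ i ∈ Finset.range (n+1), (n.choose i : ℂ) • (Y₀ ^ (l+i) * Y₁ ^ (n-i) * Y₂ ^ c) := by
    rw [add_pow, Finset.mul_sum, Finset.sum_mul]
    refine Finset.sum_congr rfl fun i _ => ?_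
    rw [MvPolynomial.smul_eq_C_mul, ← map_natCast (MvPolynomial.C (σ := Fin 3) (R := ℂ))]
    ring
  have S1 : ((Y₀ + Y₁ - MvPolynomial.C ((k : ℂ))) ^ n : P3)
      = ∑ i ∈ Finset.range (n+1), MvPolynomial.C ((n.choose i : ℂ)) *
          ((Y₀ - MvPolynomial.C ((k : ℂ))) ^ i * Y₁ ^ (n-i)) := by
    rw [show (Y₀ + Y₁ - MvPolynomial.C ((k : ℂ)) : P3)
        = (Y₀ - MvPolynomial.C ((k : ℂ))) + Y₁ by ring, add_pow]
    refine Finset.sum_congr rfl fun i _ => ?_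
    rw [← map_natCast (MvPolynomial.C (σ := Fin 3) (R := ℂ))]
    ring
  have S2 : ((Y₀ + Y₁ - MvPolynomial.C ((k : ℂ))) ^ n : P3)
      = ∑ i ∈ Finset.range (n+1), MvPolynomial.C ((n.choose i : ℂ)) *
          (Y₀ ^ i * (Y₁ - MvPolynomial.C ((k : ℂ))) ^ (n-i)) := by
    rw [show (Y₀ + Y₁ - MvPolynomial.C ((k : ℂ)) : P3)
        = Y₀ + (Y₁ - MvPolynomial.C ((k : ℂ))) by ring, add_pow]
    refine Finset.sum_congr rfl fun i _ => ?_
    rw [← map_natCast (MvPolynomial.C (σ := Fin 3) (R := ℂ))]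
    ring
  rw [expand, map_sum]
  simp only [map_smul, Lmap_mon]
  have split : (∑ i ∈ Finset.range (n+1), (n.choose i : ℂ) •
        ((Y₀ - MvPolynomial.C ((k : ℂ))) ^ (l+i) *
            (Y₀ * Y₂ ^ c
              + MvPolynomial.C ((k : ℂ)) * embt (Gop h α (Polynomial.X ^ c))
              - MvPolynomial.C ((k : ℂ) ^ 2 * α) * embt (Fop h α (Polynomial.X ^ c))) *
            Y₁ ^ (n-i)
          + Y₀ ^ (l+i) * Y₂ ^ c * (Y₁ - MvPolynomial.C ((k : ℂ))) ^ (n-i) *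
              (Y₁ - MvPolynomial.C (β * k))))
      = (Y₀ - MvPolynomial.C ((k : ℂ))) ^ l *
          (Y₀ * Y₂ ^ c
            + MvPolynomial.C ((k : ℂ)) * embt (Gop h α (Polynomial.X ^ c))
            - MvPolynomial.C ((k : ℂ) ^ 2 * α) * embt (Fop h α (Polynomial.X ^ c))) *
          (∑ i ∈ Finset.range (n+1), MvPolynomial.C ((n.choose i : ℂ)) *
            ((Y₀ - MvPolynomial.C ((k : ℂ))) ^ i * Y₁ ^ (n-i)))
        + Y₀ ^ l * Y₂ ^ c * (Y₁ - MvPolynomial.C (β * k)) *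
          (∑ i ∈ Finset.range (n+1), MvPolynomial.C ((n.choose i : ℂ)) *
            (Y₀ ^ i * (Y₁ - MvPolynomial.C ((k : ℂ))) ^ (n-i))) := by
    rw [Finset.mul_sum, Finset.mul_sum, ← Finset.sum_add_distrib]
    refine Finset.sum_congr rfl fun i _ => ?_
    rw [MvPolynomial.smul_eq_C_mul, pow_add, pow_add]
    ring
  rw [split, ← S1, ← S2]
  ring

lemma embt_add (p q : ℂ[X]) : embt (p + q) = embt p + embt q := by simp [embt]
lemma embt_smul (a : ℂ) (p : ℂ[X]) : embt (a • p) = a • embt p := by simp [embt]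
lemma Fop_add (h : ℂ[X]) (α : ℂ) (p q : ℂ[X]) :
    Fop h α (p + q) = Fop h α p + Fop h α q := by
  simp only [Fop, derivative_add, mul_add]; ring
lemma Fop_smul (h : ℂ[X]) (α : ℂ) (a : ℂ) (p : ℂ[X]) :
    Fop h α (a • p) = a • Fop h α p := by
  simp only [Fop, derivative_smul, mul_smul_comm, smul_sub]
lemma Gop_add (h : ℂ[X]) (α : ℂ) (p q : ℂ[X]) :
    Gop h α (p + q) = Gop h α p + Gop h α q := by
  simp only [Gop, Fop_add, mul_add]; ring
lemma Gop_smul (h : ℂ[X]) (α : ℂ) (a : ℂ) (p : ℂ[X]) :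
    Gop h α (a • p) = a • Gop h α p := by
  simp only [Gop, Fop_smul, mul_smul_comm, smul_add]

lemma mainf (α β : ℂ) (h : ℂ[X]) (k : ℤ) (l n : ℕ) (f : ℂ[X]) :
    Lmap α β h k (Y₀ ^ l * (Y₀ + Y₁) ^ n * embt f) =
      (Y₀ * ((Y₀ - MvPolynomial.C ((k : ℂ))) ^ l - Y₀ ^ l) * embt f
          + (MvPolynomial.C ((k : ℂ)) * embt (Gop h α f)
              - MvPolynomial.C ((k : ℂ) ^ 2 * α) * embt (Fop h α f)) *
            (Y₀ - MvPolynomial.C ((k : ℂ))) ^ l) *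
        (Y₀ + Y₁ - MvPolynomial.C ((k : ℂ))) ^ n
      + Y₀ ^ l * embt f * (Y₀ + Y₁ - MvPolynomial.C (β * k)) *
          (Y₀ + Y₁ - MvPolynomial.C ((k : ℂ))) ^ n := by
  induction f using Polynomial.induction_on' with
  | add p q hp hq =>
    rw [embt_add, Fop_add, Gop_add, embt_add, embt_add, mul_add, map_add, hp, hq]
    ring
  | monomial c a =>
    rw [← Polynomial.smul_X_eq_monomial, embt_smul, Fop_smul, Gop_smul, embt_smul, embt_smul,
      embt_pow, mul_smul_comm, map_smul, core]
    simp only [MvPolynomial.smul_eq_C_mul]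
    ring

lemma tensorD_eq (lam α β : ℂ) (h : ℂ[X]) (k : ℤ) (p : P3) :
    tensorD lam α β h k p = lam ^ k • Lmap α β h k p := by
  unfold tensorD
  rw [Lmap_apply]
  simp only [Dm]

/-- Let `λ, α ∈ ℂ*`, `deg h = 1`, `β ∈ ℂ`.  In `Ω(λ,α,h) ⊗ Ω(λ,β) = ℂ[∂₁,∂₂,t]`, for all
`k ∈ ℤ`, `l, n ∈ ℤ≥0`, `f ∈ ℂ[t]`:
`λ^{-k} d_k(∂₁^l (∂₁+∂₂)^n f) = [∂₁((∂₁-k)^l - ∂₁^l) f + (k G(f) - k² α F(f))(∂₁-k)^l] (∂₁+∂₂-k)^n`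
`+ ∂₁^l f (∂₁+∂₂-βk)(∂₁+∂₂-k)^n`. -/
theorem stmt10 (lam α : ℂ) (hlam : lam ≠ 0) (hα : α ≠ 0) (h : ℂ[X]) (hh : h.degree = 1)
    (β : ℂ) (k : ℤ) (l n : ℕ) (f : ℂ[X]) :
    lam ^ (-k) • tensorD lam α β h k
        ((MvPolynomial.X (0 : Fin 3)) ^ l *
          (MvPolynomial.X (0 : Fin 3) + MvPolynomial.X (1 : Fin 3)) ^ n * embt f) =
      (MvPolynomial.X (0 : Fin 3) *
            ((MvPolynomial.X (0 : Fin 3) - MvPolynomial.C ((k : ℂ))) ^ l -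
              (MvPolynomial.X (0 : Fin 3)) ^ l) * embt f
          + (MvPolynomial.C ((k : ℂ)) * embt (Gop h α f)
              - MvPolynomial.C ((k : ℂ) ^ 2 * α) * embt (Fop h α f)) *
            (MvPolynomial.X (0 : Fin 3) - MvPolynomial.C ((k : ℂ))) ^ l) *
        (MvPolynomial.X (0 : Fin 3) + MvPolynomial.X (1 : Fin 3) - MvPolynomial.C ((k : ℂ))) ^ n
      + (MvPolynomial.X (0 : Fin 3)) ^ l * embt f *
          (MvPolynomial.X (0 : Fin 3) + MvPolynomial.X (1 : Fin 3) - MvPolynomial.C (β * k)) *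
          (MvPolynomial.X (0 : Fin 3) + MvPolynomial.X (1 : Fin 3) -
            MvPolynomial.C ((k : ℂ))) ^ n := by
  rw [tensorD_eq, smul_smul, ← zpow_add₀ hlam, neg_add_cancel, zpow_zero, one_smul, mainf]
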